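/- Let d₁, d₂, d₃ ≥ 0 and let m = diag(d₁+d₂+d₃, d₁−d₂−d₃, −d₁+d₂−d₃, −d₁−d₂+d₃) be the type-I canonical depolarizing differential Mueller matrix. If sᵀ(mᵀG + Gm)s = 0 for every admissible Stokes vector s ∈ ℝ⁴, then d₁ = d₂ = d₃ = 0, i.e. m = 0 and the transformation is non-depolarizing; thus the derivative of the Minkowski metric vanishes identically only for non-depolarizing differential Mueller matrices. -/

import Mathlib

open Matrix

/-- The Minkowski metric matrix G = diag(1, -1, -1, -1). -/
noncomputable def G : Matrix (Fin 4) (Fin 4) ℝ := Matrix.diagonal ![1, -1, -1, -1]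

/-- A Stokes vector is admissible if s₀ ≥ 0 and sᵀGs ≥ 0. -/
def StokesAdmissible (s : Fin 4 → ℝ) : Prop := 0 ≤ s 0 ∧ 0 ≤ s ⬝ᵥ G.mulVec s

/-- If the derivative of the Minkowski metric vanishes for every admissible Stokes vector
under the type-I canonical depolarizing differential Mueller matrix, then all the
canonical depolarization parameters vanish, i.e. the transformation is non-depolarizing. -/
theorem typeI_zero_quadratic_form_iff_nondepolarizing
    (d₁ d₂ d₃ : ℝ) (h₁ : 0 ≤ d₁) (h₂ : 0 ≤ d₂) (h₃ : 0 ≤ d₃)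
    (m : Matrix (Fin 4) (Fin 4) ℝ)
    (hm : m = Matrix.diagonal ![d₁ + d₂ + d₃, d₁ - d₂ - d₃, -d₁ + d₂ - d₃, -d₁ - d₂ + d₃])
    (hzero : ∀ s : Fin 4 → ℝ, StokesAdmissible s → s ⬝ᵥ (mᵀ * G + G * m).mulVec s = 0) :
    d₁ = 0 ∧ d₂ = 0 ∧ d₃ = 0 ∧ m = 0 := by
  have ha : StokesAdmissible ![1, 1, 0, 0] := by
    constructor
    · norm_num
    · simp [G, Matrix.mulVec, dotProduct, Fin.sum_univ_four, Matrix.diagonal]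
  have hb : StokesAdmissible ![1, 0, 1, 0] := by
    constructor
    · norm_num
    · simp [G, Matrix.mulVec, dotProduct, Fin.sum_univ_four, Matrix.diagonal]
  have ea := hzero _ ha
  have eb := hzero _ hb
  simp [hm, G, Matrix.mulVec, dotProduct, Fin.sum_univ_four, Matrix.mul_apply,
    Matrix.diagonal, Matrix.transpose_apply] at ea eb
  have hd2 : d₂ = 0 := by linarith
  have hd3 : d₃ = 0 := by linarith
  have hd1 : d₁ = 0 := by linarith
  refine ⟨hd1, hd2, hd3, ?_⟩
  subst hd1 hd2 hd3
  simp [hm]
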